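/- For every natural number N ≥ 1, the N-qubit operator X₊ = (|0^N⟩⟨1^N| + |1^N⟩⟨0^N|)/2 admits the decomposition X₊ = (1/(N+1)) · Σ_{k=0}^{N} (−1)^k cos(θ_k) · M_{θ_k}, where θ_k = kπ/(N+1) and M_θ = (cos θ · σx + sin θ · σy)^{⊗N}. -/

import Mathlib

open Matrix Complex

noncomputable section

/-- Pauli X matrix. -/
def pX : Matrix (Fin 2) (Fin 2) ℂ := !![0, 1; 1, 0]

/-- Pauli Y matrix. -/
def pY : Matrix (Fin 2) (Fin 2) ℂ := !![0, -Complex.I; Complex.I, 0]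

/-- N-fold Kronecker (tensor) power of a single-qubit operator, as a matrix on
`(ℂ²)^{⊗N}` with computational basis indexed by bit strings `Fin N → Fin 2`. -/
def tensorPow (N : ℕ) (A : Matrix (Fin 2) (Fin 2) ℂ) :
    Matrix (Fin N → Fin 2) (Fin N → Fin 2) ℂ :=
  Matrix.of fun b c => ∏ j, A (b j) (c j)

/-- The all-zeros bit string, indexing `|0^N⟩`. -/
def zeros (N : ℕ) : Fin N → Fin 2 := fun _ => 0

/-- The all-ones bit string, indexing `|1^N⟩`. -/
def ones (N : ℕ) : Fin N → Fin 2 := fun _ => 1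

/-- `M_θ = (cos θ · σx + sin θ · σy)^{⊗N}`. -/
def Mθ (N : ℕ) (θ : ℝ) : Matrix (Fin N → Fin 2) (Fin N → Fin 2) ℂ :=
  tensorPow N ((Real.cos θ : ℂ) • pX + (Real.sin θ : ℂ) • pY)

/-- `X₊ = (|0^N⟩⟨1^N| + |1^N⟩⟨0^N|)/2`. -/
def Xplus (N : ℕ) : Matrix (Fin N → Fin 2) (Fin N → Fin 2) ℂ :=
  ((1 : ℂ) / 2) • (Matrix.single (zeros N) (ones N) (1 : ℂ)
    + Matrix.single (ones N) (zeros N) (1 : ℂ))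

/- ########## auxiliary lemmas ########## -/

lemma aux_geomsum (N s : ℕ) :
    ∑ k ∈ Finset.range (N+1), Complex.exp (2 * Real.pi * I * k * s / (N+1))
      = if (N+1) ∣ s then ((N:ℂ)+1) else 0 := by
  have hN1 : ((N:ℂ)+1) ≠ 0 := Nat.cast_add_one_ne_zero N
  have hpi : (Real.pi : ℂ) ≠ 0 := by exact_mod_cast Real.pi_ne_zero
  have h2 : (2 * (Real.pi:ℂ) * I) ≠ 0 := by
    simp [hpi, Complex.I_ne_zero]
  set z : ℂ := Complex.exp (2 * Real.pi * I * s / (N+1)) with hz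
  have hpow : ∀ k : ℕ, Complex.exp (2 * Real.pi * I * k * s / (N+1)) = z ^ k := by
    intro k
    rw [hz, ← Complex.exp_nat_mul]
    congr 1
    field_simp
  have hzN : z ^ (N+1) = 1 := by
    rw [← Complex.exp_nat_mul]
    have h3 : ((N+1 : ℕ):ℂ) * (2 * Real.pi * I * s / (N+1)) = (s : ℤ) * (2 * Real.pi * I) := by
      push_cast
      field_simp
    rw [h3, Complex.exp_int_mul_two_pi_mul_I]
  simp only [hpow]
  by_cases h1 : z = 1
  · have hdvd : (N+1) ∣ s := by
      rw [hz, Complex.exp_eq_one_iff] at h1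
      obtain ⟨n, hn⟩ := h1
      have heq : (2*(Real.pi:ℂ)*I) * s = (2*(Real.pi:ℂ)*I) * (n*((N:ℂ)+1)) := by
        field_simp at hn
        linear_combination (2*(Real.pi:ℂ)*I) * hn
      have hs : (s:ℂ) = n * ((N:ℂ)+1) := mul_left_cancel₀ h2 heq
      have hsz : (s:ℤ) = n * ((N:ℤ)+1) := by exact_mod_cast hs
      have : ((N+1:ℕ):ℤ) ∣ (s:ℤ) := ⟨n, by push_cast; linarith⟩
      exact_mod_cast this
    simp [h1, hdvd]
  · rw [geom_sum_eq h1, hzN]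
    have hdvd : ¬ (N+1) ∣ s := by
      rintro ⟨t, ht⟩
      apply h1
      rw [hz, ht]
      have h4 : 2 * (Real.pi:ℂ) * I * (((N+1) * t : ℕ):ℂ) / ((N:ℂ)+1) = (t:ℤ) * (2 * Real.pi * I) := by
        push_cast
        field_simp
      rw [h4, Complex.exp_int_mul_two_pi_mul_I]
    simp [hdvd]

lemma aux_keysum (N w : ℕ) (hN : 1 ≤ N) (hw : w ≤ N) :
    ∑ k ∈ Finset.range (N+1),
      ((-1:ℂ)^k * ((Real.cos ((k:ℝ) * Real.pi / (N+1)) : ℝ) : ℂ))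
        * Complex.exp (I * ((k:ℝ) * Real.pi / (N+1)) * (2*(w:ℂ) - N))
      = if w = 0 ∨ w = N then ((N:ℂ)+1)/2 else 0 := by
  have hN1 : ((N:ℂ)+1) ≠ 0 := Nat.cast_add_one_ne_zero N
  have key : ∀ a b c d A B : ℂ, a+b+d = A → a+c+d = B →
      Complex.exp a * ((Complex.exp b + Complex.exp c)/2) * Complex.exp d
        = (Complex.exp A + Complex.exp B)/2 := by
    intro a b c d A B h1 h2
    rw [← h1, ← h2, Complex.exp_add, Complex.exp_add, Complex.exp_add, Complex.exp_add]
    ring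
  have hterm : ∀ k ∈ Finset.range (N+1),
      ((-1:ℂ)^k * ((Real.cos ((k:ℝ) * Real.pi / (N+1)) : ℝ) : ℂ))
        * Complex.exp (I * ((k:ℝ) * Real.pi / (N+1)) * (2*(w:ℂ) - N))
      = (Complex.exp (2 * Real.pi * I * k * (w+1) / (N+1))
          + Complex.exp (2 * Real.pi * I * k * w / (N+1))) / 2 := by
    intro k _
    have hm1 : ((-1:ℂ))^k = Complex.exp ((k:ℂ) * (Real.pi * I)) := by
      rw [Complex.exp_nat_mul, Complex.exp_pi_mul_I]
    rw [hm1, Complex.ofReal_cos, Complex.cos]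
    push_cast
    apply key
    · field_simp
      ring
    · field_simp
      ring
  have g1 := aux_geomsum N (w+1)
  push_cast at g1
  rw [Finset.sum_congr rfl hterm, ← Finset.sum_div, Finset.sum_add_distrib,
    g1, aux_geomsum N w]
  have d1 : (N+1) ∣ w ↔ w = 0 :=
    ⟨fun h => Nat.eq_zero_of_dvd_of_lt h (by omega), fun h => by simp [h]⟩
  have d2 : (N+1) ∣ (w+1) ↔ w = N :=
    ⟨fun h => by have := Nat.le_of_dvd (by omega) h; omega, fun h => by simp [h]⟩
  simp only [d1, d2]
  by_cases h0 : w = 0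
  · have hn : ¬ w = N := by omega
    simp [h0, hn, show ¬ (0:ℕ) = N by omega]
  · by_cases hn : w = N
    · simp [h0, hn, show ¬ N = 0 by omega]
    · simp [h0, hn]

lemma aux_fin2_ne_one {x : Fin 2} (h : x ≠ 1) : x = 0 := by
  fin_cases x <;> simp_all

lemma aux_fin2_ne_zero {x : Fin 2} (h : x ≠ 0) : x = 1 := by
  fin_cases x <;> simp_all

lemma aux_entry (θ : ℝ) (i j : Fin 2) :
    (((Real.cos θ : ℂ) • pX + (Real.sin θ : ℂ) • pY)) i j
      = if i = j then 0 else Complex.exp ((if i = 1 then 1 else -1) * θ * I) := by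
  fin_cases i <;> fin_cases j <;> simp [pX, pY]
  · rw [show -((θ:ℂ)*I) = (-(θ:ℂ))*I by ring, Complex.exp_mul_I, Complex.cos_neg,
      Complex.sin_neg]
    ring
  · rw [Complex.exp_mul_I]

lemma aux_std (N : ℕ) (d e b c : Fin N → Fin 2) :
    Matrix.single d e (1:ℂ) b c = if d = b ∧ e = c then 1 else 0 := by
  simp [Matrix.single]

lemma aux_Mθ_entry_zero (N : ℕ) (θ : ℝ) (b c : Fin N → Fin 2) (j : Fin N)
    (hj : b j = c j) : Mθ N θ b c = 0 := by
  unfold Mθ tensorPow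
  simp only [Matrix.of_apply]
  apply Finset.prod_eq_zero (Finset.mem_univ j)
  rw [aux_entry, if_pos hj]

lemma aux_Mθ_entry (N : ℕ) (θ : ℝ) (b c : Fin N → Fin 2)
    (hbc : ∀ j, b j ≠ c j) :
    Mθ N θ b c
      = Complex.exp (I * θ *
          (2 * ((Finset.univ.filter (fun j => b j = 1)).card : ℂ) - N)) := by
  unfold Mθ tensorPow
  simp only [Matrix.of_apply]
  have h1 : ∀ j : Fin N,
      (((Real.cos θ : ℂ) • pX + (Real.sin θ : ℂ) • pY)) (b j) (c j)
        = Complex.exp ((if b j = 1 then (1:ℂ) else -1) * θ * I) := by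
    intro j
    rw [aux_entry, if_neg (hbc j)]
  rw [Finset.prod_congr rfl (fun j _ => h1 j), ← Complex.exp_sum]
  congr 1
  have h2 : ∀ j : Fin N, (if b j = 1 then (1:ℂ) else -1) * θ * I
      = (2 * (if b j = 1 then (1:ℂ) else 0) - 1) * θ * I := by
    intro j
    by_cases h : b j = 1 <;> simp [h] <;> ring
  rw [Finset.sum_congr rfl (fun j _ => h2 j)]
  rw [← Finset.sum_mul, ← Finset.sum_mul]
  have h3 : ∑ j : Fin N, (2 * (if b j = 1 then (1:ℂ) else 0) - 1)
      = 2 * ((Finset.univ.filter (fun j => b j = 1)).card : ℂ) - N := by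
    rw [Finset.sum_sub_distrib, ← Finset.mul_sum, Finset.sum_boole]
    simp
  rw [h3]
  ring

theorem Xplus_decomposition (N : ℕ) (hN : 1 ≤ N) :
    Xplus N
      = ((1 : ℂ) / (N + 1)) •
          ∑ k ∈ Finset.range (N + 1),
            (((-1 : ℂ) ^ k) * ((Real.cos ((k : ℝ) * Real.pi / (N + 1)) : ℝ) : ℂ)) •
              Mθ N ((k : ℝ) * Real.pi / (N + 1)) := by
  have hN1 : ((N:ℂ)+1) ≠ 0 := Nat.cast_add_one_ne_zero N
  have j0 : Fin N := ⟨0, hN⟩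
  have hzo : zeros N ≠ ones N := by
    intro h
    have := congrFun h j0
    simp [zeros, ones] at this
  ext b c
  simp only [Matrix.smul_apply, Matrix.sum_apply, smul_eq_mul, Xplus,
    Matrix.add_apply, aux_std]
  by_cases hbc : ∀ j, b j ≠ c j
  · -- c is the bitwise complement of b
    set w : ℕ := (Finset.univ.filter (fun j => b j = 1)).card with hwdef
    have hw : w ≤ N := by
      have := Finset.card_filter_le (Finset.univ : Finset (Fin N)) (fun j => b j = 1)
      simpa using this
    have hM : ∀ k ∈ Finset.range (N+1),
        (((-1 : ℂ) ^ k) * ((Real.cos ((k : ℝ) * Real.pi / (N + 1)) : ℝ) : ℂ))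
            * Mθ N ((k : ℝ) * Real.pi / (N + 1)) b c
          = (((-1 : ℂ) ^ k) * ((Real.cos ((k : ℝ) * Real.pi / (N + 1)) : ℝ) : ℂ))
            * Complex.exp (I * ((k:ℝ) * Real.pi / (N+1)) * (2*(w:ℂ) - N)) := by
      intro k _
      rw [aux_Mθ_entry N _ b c hbc, ← hwdef]
      norm_cast
    rw [Finset.sum_congr rfl hM, aux_keysum N w hN hw]
    by_cases h0 : w = 0
    · have hb : b = zeros N := by
        funext j
        apply aux_fin2_ne_one
        intro h
        have hmem : j ∈ Finset.univ.filter (fun j => b j = 1) := by simp [h]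
        exact Finset.card_ne_zero_of_mem hmem (by rw [← hwdef]; exact h0)
      have hc : c = ones N := by
        funext j
        apply aux_fin2_ne_zero
        intro h
        exact hbc j (by rw [hb, h]; rfl)
      have hne : ¬ (ones N = b ∧ zeros N = c) := by
        rintro ⟨h1, -⟩
        exact hzo (hb ▸ h1.symm)
      rw [if_pos ⟨hb.symm, hc.symm⟩, if_neg hne, if_pos (Or.inl h0)]
      field_simp
      simp
    · by_cases h1 : w = N
      · have hfu : Finset.univ.filter (fun j => b j = 1) = Finset.univ := by
          apply Finset.eq_univ_of_card
          rw [← hwdef, h1]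
          simp
        have hb : b = ones N := by
          funext j
          have hj2 : j ∈ Finset.univ.filter (fun j => b j = 1) := by
            rw [hfu]; exact Finset.mem_univ j
          exact (Finset.mem_filter.mp hj2).2
        have hc : c = zeros N := by
          funext j
          apply aux_fin2_ne_one
          intro h
          exact hbc j (by rw [hb, h]; rfl)
        have hne : ¬ (zeros N = b ∧ ones N = c) := by
          rintro ⟨h2, -⟩
          exact hzo (hb ▸ h2)
        rw [if_neg hne, if_pos ⟨hb.symm, hc.symm⟩, if_pos (Or.inr h1)]
        field_simp
        simp
      · have hbz : ¬ (zeros N = b) := by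
          intro h
          apply h0
          rw [hwdef]
          rw [Finset.card_eq_zero]
          ext j
          simp [← h, zeros]
        have hbo : ¬ (ones N = b) := by
          intro h
          apply h1
          rw [hwdef, ← h]
          simp [ones]
        rw [if_neg (fun hc => hbz hc.1), if_neg (fun hc => hbo hc.1),
          if_neg (by push_neg; exact ⟨h0, h1⟩)]
        simp
  · push_neg at hbc
    obtain ⟨j, hj⟩ := hbc
    have hM : ∀ k ∈ Finset.range (N+1),
        (((-1 : ℂ) ^ k) * ((Real.cos ((k : ℝ) * Real.pi / (N + 1)) : ℝ) : ℂ))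
            * Mθ N ((k : ℝ) * Real.pi / (N + 1)) b c = 0 := by
      intro k _
      rw [aux_Mθ_entry_zero N _ b c j hj, mul_zero]
    rw [Finset.sum_congr rfl hM, Finset.sum_const_zero, mul_zero]
    have h1 : ¬ (zeros N = b ∧ ones N = c) := by
      rintro ⟨h1, h2⟩
      rw [← h1, ← h2] at hj
      simp [zeros, ones] at hj
    have h2 : ¬ (ones N = b ∧ zeros N = c) := by
      rintro ⟨h1, h2⟩
      rw [← h1, ← h2] at hj
      simp [zeros, ones] at hj
    rw [if_neg h1, if_neg h2]
    simp
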